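/- Let g and h be Hermitian unitary complex n×n matrices that anticommute (gh = -hg), let f be a matrix commuting with gh, and let P be a projection (P² = P) that commutes with each of g, h and f. Let a > 0 and b be real numbers and set U = exp(θ·gh/2) with θ = arctan(b/a). Then U(agP + bhP)U⁻¹ = √(a² + b²)·gP and U(fP)U⁻¹ = fP. -/

import Mathlib

open Matrix

open NormedSpace in
lemma expK_formula {n : Type*} [Fintype n] [DecidableEq n]
    (K : Matrix n n ℂ) (hK : K * K = -1) (t : ℝ) :
    NormedSpace.exp ((t : ℂ) • K) =
      ((Real.cos t : ℝ) : ℂ) • (1 : Matrix n n ℂ) + ((Real.sin t : ℝ) : ℂ) • K := by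
  letI : SeminormedRing (Matrix n n ℂ) := Matrix.linftyOpSemiNormedRing
  letI : NormedRing (Matrix n n ℂ) := Matrix.linftyOpNormedRing
  letI : NormedAlgebra ℝ (Matrix n n ℂ) := Matrix.linftyOpNormedAlgebra
  set φ : ℂ →ₐ[ℝ] Matrix n n ℂ := Complex.liftAux K hK with hφ
  have hcont : Continuous φ := φ.toLinearMap.continuous_of_finiteDimensional
  have h1 : (t : ℂ) • K = φ ((t : ℂ) * Complex.I) := by
    rw [hφ, Complex.liftAux_apply]
    simp [Complex.coe_smul]
  rw [h1]
  erw [← map_exp φ hcont]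
  rw [← Complex.exp_eq_exp_ℂ, Complex.exp_mul_I,
    hφ, Complex.liftAux_apply]
  simp [Algebra.algebraMap_eq_smul_one, Complex.coe_smul, ← Complex.ofReal_cos, ← Complex.ofReal_sin]


/-- Let `g, h` be Hermitian unitary anticommuting matrices, `f` a matrix
commuting with `g * h`, and `P` a projection commuting with `g`, `h` and `f`.  For real
`a > 0` and `b`, with `θ = arctan (b / a)` and `U = exp (θ • g h / 2)`, conjugation by `U`
sends `a g P + b h P` to `√(a² + b²) g P` and fixes `f P`. -/
theorem stmt1 {n : Type*} [Fintype n] [DecidableEq n]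
    (g h f P : Matrix n n ℂ)
    (hg_herm : gᴴ = g) (hh_herm : hᴴ = h)
    (hg_unit : gᴴ * g = 1 ∧ g * gᴴ = 1)
    (hh_unit : hᴴ * h = 1 ∧ h * hᴴ = 1)
    (hanti : g * h = -(h * g))
    (hf : f * (g * h) = (g * h) * f)
    (hP_proj : P * P = P)
    (hPg : P * g = g * P) (hPh : P * h = h * P) (hPf : P * f = f * P)
    (a b : ℝ) (ha : 0 < a)
    (θ : ℝ) (hθ : θ = Real.arctan (b / a))
    (U : Matrix n n ℂ)
    (hU : U = NormedSpace.exp (((θ / 2 : ℝ) : ℂ) • (g * h))) :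
    U * ((a : ℂ) • (g * P) + (b : ℂ) • (h * P)) * U⁻¹ =
        ((Real.sqrt (a ^ 2 + b ^ 2) : ℝ) : ℂ) • (g * P) ∧
      U * (f * P) * U⁻¹ = f * P := by
  have hgg : g * g = 1 := by have := hg_unit.1; rwa [hg_herm] at this
  have hhh : h * h = 1 := by have := hh_unit.1; rwa [hh_herm] at this
  have hhg : h * g = -(g * h) := by rw [hanti, neg_neg]
  set K := g * h with hKdef
  have hK2 : K * K = -1 := by
    calc K * K = g * (h * g) * h := by rw [hKdef]; noncomm_ring
    _ = g * -(g * h) * h := by rw [hhg]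
    _ = -(g * g * (h * h)) := by noncomm_ring
    _ = -1 := by rw [hgg, hhh, mul_one]
  have hgK : g * K = h := by rw [hKdef, ← mul_assoc, hgg, one_mul]
  have hKg : K * g = -h := by
    rw [hKdef, mul_assoc, hhg]
    calc g * -(g * h) = -(g * g * h) := by noncomm_ring
    _ = -h := by rw [hgg, one_mul]
  have hKh : K * h = g := by rw [hKdef, mul_assoc, hhh, mul_one]
  have hhK : h * K = -g := by
    rw [hKdef, ← mul_assoc, hhg]
    calc -(g * h) * h = -(g * (h * h)) := by noncomm_ring
    _ = -g := by rw [hhh, mul_one]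
  have hPK : P * K = K * P := by
    rw [hKdef, ← mul_assoc, hPg, mul_assoc, hPh, ← mul_assoc]
  set c : ℂ := ((Real.cos (θ / 2) : ℝ) : ℂ) with hc
  set s : ℂ := ((Real.sin (θ / 2) : ℝ) : ℂ) with hs
  have hU' : U = c • 1 + s • K := by rw [hU, expK_formula _ hK2]
  have hcs : c ^ 2 + s ^ 2 = 1 := by
    rw [hc, hs]
    norm_cast
    exact Real.cos_sq_add_sin_sq _
  have hprod : (c • 1 + s • K) * (c • 1 - s • K) = 1 := by
    have expand : (c • 1 + s • K) * (c • 1 - s • K)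
        = (c * c) • (1 : Matrix n n ℂ) + (s * s) • 1 := by
      simp [mul_sub, add_mul, smul_mul_assoc, mul_smul_comm, smul_smul, hK2]
      module
    rw [expand, ← add_smul, show c * c + s * s = 1 by linear_combination hcs, one_smul]
  have hUinv' : U⁻¹ = c • 1 - s • K := by
    apply inv_eq_right_inv
    rw [hU']
    exact hprod
  have hUU : U * U⁻¹ = 1 := by rw [hUinv', hU']; exact hprod
  have hPUinv : P * U⁻¹ = U⁻¹ * P := by
    rw [hUinv']
    simp only [mul_sub, sub_mul, mul_smul_comm, smul_mul_assoc, mul_one, one_mul, hPK]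
  have fix : ∀ X : Matrix n n ℂ, X * K = K * X → U * X * U⁻¹ = X := by
    intro X hX
    have h1 : U * X = X * U := by
      rw [hU']
      simp only [mul_add, add_mul, mul_smul_comm, smul_mul_assoc, mul_one, one_mul, hX]
    rw [h1, mul_assoc, hUU, mul_one]
  have conj_g : U * g * U⁻¹ = (c ^ 2 - s ^ 2) • g - (2 * s * c) • h := by
    rw [hUinv', hU']
    simp only [mul_add, add_mul, mul_sub, sub_mul, mul_smul_comm, smul_mul_assoc,
      smul_smul, one_mul, mul_one, neg_mul, mul_neg, neg_neg, smul_neg, hgK, hKg, hKh, hhK]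
    module
  have conj_h : U * h * U⁻¹ = (c ^ 2 - s ^ 2) • h + (2 * s * c) • g := by
    rw [hUinv', hU']
    simp only [mul_add, add_mul, mul_sub, sub_mul, mul_smul_comm, smul_mul_assoc,
      smul_smul, one_mul, mul_one, neg_mul, mul_neg, neg_neg, smul_neg, hgK, hKg, hKh, hhK]
    module
  -- trig
  have hna : (0:ℝ) < a ^ 2 + b ^ 2 := by positivity
  set r : ℝ := Real.sqrt (a ^ 2 + b ^ 2) with hrdef
  have hr : 0 < r := Real.sqrt_pos.2 hna
  have hrr : r * r = a ^ 2 + b ^ 2 := Real.mul_self_sqrt hna.le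
  have hsq : Real.sqrt (1 + (b / a) ^ 2) = r / a := by
    rw [show 1 + (b / a) ^ 2 = (a ^ 2 + b ^ 2) / a ^ 2 by field_simp]
    rw [Real.sqrt_div hna.le, Real.sqrt_sq ha.le]
  have hcosθ : Real.cos θ = a / r := by
    rw [hθ, Real.cos_arctan, hsq]
    field_simp
  have hsinθ : Real.sin θ = b / r := by
    rw [hθ, Real.sin_arctan, hsq]
    field_simp
  have hcos2 : ((Real.cos θ : ℝ) : ℂ) = c ^ 2 - s ^ 2 := by
    have h2 := Real.cos_two_mul' (θ / 2)
    rw [show (2:ℝ) * (θ / 2) = θ by ring] at h2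
    rw [hc, hs, h2]
    push_cast
    ring
  have hsin2 : ((Real.sin θ : ℝ) : ℂ) = 2 * s * c := by
    have h2 := Real.sin_two_mul (θ / 2)
    rw [show (2:ℝ) * (θ / 2) = θ by ring] at h2
    rw [hc, hs, h2]
    push_cast
    ring
  have hR1 : a * Real.cos θ + b * Real.sin θ = r := by
    rw [hcosθ, hsinθ]
    field_simp
    linear_combination -hrr
  have hR2 : b * Real.cos θ - a * Real.sin θ = 0 := by
    rw [hcosθ, hsinθ]
    field_simp
    ring
  have hag : (a:ℂ) * (c ^ 2 - s ^ 2) + (b:ℂ) * (2 * s * c) = ((r : ℝ) : ℂ) := by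
    rw [← hcos2, ← hsin2]
    exact_mod_cast congrArg (Complex.ofReal) hR1
  have hbg : (b:ℂ) * (c ^ 2 - s ^ 2) - (a:ℂ) * (2 * s * c) = 0 := by
    rw [← hcos2, ← hsin2]
    exact_mod_cast congrArg (Complex.ofReal) hR2
  constructor
  · have hmv : ∀ X : Matrix n n ℂ, U * (X * P) * U⁻¹ = U * X * U⁻¹ * P := by
      intro X
      calc U * (X * P) * U⁻¹ = U * X * (P * U⁻¹) := by noncomm_ring
      _ = U * X * (U⁻¹ * P) := by rw [hPUinv]
      _ = U * X * U⁻¹ * P := by noncomm_ring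
    have hstep : U * ((a:ℂ) • (g * P) + (b:ℂ) • (h * P)) * U⁻¹
        = (a:ℂ) • (U * g * U⁻¹ * P) + (b:ℂ) • (U * h * U⁻¹ * P) := by
      simp only [mul_add, add_mul, mul_smul_comm, smul_mul_assoc]
      rw [hmv g, hmv h]
    rw [hstep, conj_g, conj_h]
    have hnf : (a:ℂ) • (((c ^ 2 - s ^ 2) • g - (2 * s * c) • h) * P)
          + (b:ℂ) • (((c ^ 2 - s ^ 2) • h + (2 * s * c) • g) * P)
        = ((a:ℂ) * (c ^ 2 - s ^ 2) + (b:ℂ) * (2 * s * c)) • (g * P)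
          + ((b:ℂ) * (c ^ 2 - s ^ 2) - (a:ℂ) * (2 * s * c)) • (h * P) := by
      simp only [sub_mul, add_mul, smul_mul_assoc]
      module
    rw [hnf, hag, hbg, zero_smul, add_zero]
  · apply fix
    rw [mul_assoc, hPK, ← mul_assoc, hf, mul_assoc]
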